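/- Let d ≥ 1, 0 < λ ≤ Λ, C₀ > c₀ > 0 and L > R > 0, and set Q_L^b = {(x,t) ∈ ℝ^d × ℝ : |x| < L, 0 < t < L²}. Suppose w is upper semicontinuous on closure(Q_L^b) and is a viscosity subsolution of ∂_t w − P⁺(D²w) = 0 in Q_L^b, with w(x,0) ≤ c₀ for all |x| ≤ L and w ≤ C₀ on closure(Q_L^b). Then there exists a constant C depending only on C₀, d and Λ such that w(x,t) ≤ c₀ + C·R²/L² for all (x,t) ∈ closure(Q_R^b). -/

import Mathlib

open Set Filter Topology
open scoped Classical

noncomputable section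

abbrev Mat (d : ℕ) := Matrix (Fin d) (Fin d) ℝ
abbrev Spc (d : ℕ) := EuclideanSpace ℝ (Fin d)

/-- Euclidean dot product. -/
def dotR {d : ℕ} (x y : Spc d) : ℝ := ∑ i, x i * y i

/-- The vector in `ℝ^d` with integer coordinates `k`. -/
def intVec {d : ℕ} (k : Fin d → ℤ) : Spc d :=
  (WithLp.equiv 2 (Fin d → ℝ)).symm fun i => (k i : ℝ)

/-- A direction is rational if it is a real multiple of a nonzero integer vector. -/
def IsRatDir {d : ℕ} (ν : Spc d) : Prop :=
  ∃ k : Fin d → ℤ, intVec k ≠ 0 ∧ ∃ c : ℝ, ν = c • intVec k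

/-- Pucci maximal operator `P⁺(M) = Σ_{e>0} Λ e + Σ_{e<0} λ e` over the eigenvalues of `M`. -/
noncomputable def pucciPlus (lam Lam : ℝ) {d : ℕ} (M : Mat d) : ℝ :=
  if hM : M.IsHermitian then
    ∑ i, (Lam * max (hM.eigenvalues i) 0 + lam * min (hM.eigenvalues i) 0)
  else 0

noncomputable def timeDeriv {d : ℕ} (φ : Spc d × ℝ → ℝ) (p : Spc d × ℝ) : ℝ :=
  deriv (fun s => φ (p.1, s)) p.2

noncomputable def spaceGrad {d : ℕ} (φ : Spc d × ℝ → ℝ) (p : Spc d × ℝ) : Spc d :=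
  (WithLp.equiv 2 (Fin d → ℝ)).symm fun i =>
    fderiv ℝ (fun y => φ (y, p.2)) p.1 (EuclideanSpace.single i 1)

noncomputable def spaceHess {d : ℕ} (φ : Spc d × ℝ → ℝ) (p : Spc d × ℝ) : Mat d :=
  Matrix.of fun i j =>
    fderiv ℝ (fun y => (fderiv ℝ (fun z => φ (z, p.2)) y) (EuclideanSpace.single j 1))
      p.1 (EuclideanSpace.single i 1)

/-- Viscosity subsolution of `∂ₜ u - H(D²u, Du, (x,t)) = 0` on `O`. -/
def ViscSubsol {d : ℕ} (O : Set (Spc d × ℝ)) (u : Spc d × ℝ → ℝ)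
    (H : Mat d → Spc d → Spc d × ℝ → ℝ) : Prop :=
  ∀ φ : Spc d × ℝ → ℝ, ∀ p ∈ O, ContDiffAt ℝ 2 φ p →
    IsLocalMaxOn (fun q => u q - φ q) O p →
    timeDeriv φ p - H (spaceHess φ p) (spaceGrad φ p) p ≤ 0

/-- Viscosity supersolution of `∂ₜ u - H(D²u, Du, (x,t)) = 0` on `O`. -/
def ViscSupersol {d : ℕ} (O : Set (Spc d × ℝ)) (u : Spc d × ℝ → ℝ)
    (H : Mat d → Spc d → Spc d × ℝ → ℝ) : Prop :=
  ∀ φ : Spc d × ℝ → ℝ, ∀ p ∈ O, ContDiffAt ℝ 2 φ p →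
    IsLocalMinOn (fun q => u q - φ q) O p →
    0 ≤ timeDeriv φ p - H (spaceHess φ p) (spaceGrad φ p) p

/-- The half space `P_ν = {(x,t) : x·ν ≥ 0}`. -/
def Pnu {d : ℕ} (ν : Spc d) : Set (Spc d × ℝ) := {p | 0 ≤ dotR p.1 ν}
def bdryPnu {d : ℕ} (ν : Spc d) : Set (Spc d × ℝ) := {p | dotR p.1 ν = 0}
def intPnu {d : ℕ} (ν : Spc d) : Set (Spc d × ℝ) := {p | 0 < dotR p.1 ν}

/-- The box `Q_L = {0 < x_ν < L, |x'| < L, |t| < L²}`. -/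
def QL {d : ℕ} (ν : Spc d) (L : ℝ) : Set (Spc d × ℝ) :=
  {p | 0 < dotR p.1 ν ∧ dotR p.1 ν < L ∧ ‖p.1 - dotR p.1 ν • ν‖ < L ∧ |p.2| < L ^ 2}

def UnifElliptic {d : ℕ} {α : Type*} (lam Lam : ℝ) (F : Mat d → α → ℝ) : Prop :=
  ∀ M N : Mat d, M.IsSymm → N.PosSemidef → ∀ a : α,
    lam * N.trace ≤ F (M + N) a - F M a ∧ F (M + N) a - F M a ≤ Lam * N.trace

/-- Bounded viscosity solution of a Dirichlet problem on `O` with boundary part `bd`. -/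
def IsBddViscSolOn {d : ℕ} (O bd : Set (Spc d × ℝ)) (u : Spc d × ℝ → ℝ)
    (H : Mat d → Spc d → Spc d × ℝ → ℝ) (gbd : Spc d × ℝ → ℝ) : Prop :=
  ContinuousOn u (O ∪ bd) ∧ (∃ K : ℝ, ∀ p ∈ O ∪ bd, |u p| ≤ K) ∧
  ViscSubsol O u H ∧ ViscSupersol O u H ∧ ∀ p ∈ bd, u p = gbd p

/-- `ℤ^d × ℤ` space-time periodicity. -/
def SpaceTimePeriodic {d : ℕ} (ρ : Spc d × ℝ → ℝ) : Prop :=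
  ∀ (p : Spc d × ℝ) (k : Fin d → ℤ) (m : ℤ), ρ (p.1 + intVec k, p.2 + m) = ρ p

end

/-- The bottom box `Q_L^b = {|x| < L, 0 < t < L²}`. -/
def QLb {d : ℕ} (L : ℝ) : Set (Spc d × ℝ) := {p | ‖p.1‖ < L ∧ 0 < p.2 ∧ p.2 < L ^ 2}


section Aux

open Set Filter Topology

lemma usc_exists_max {X : Type*} [TopologicalSpace X] {S : Set X} (hS : IsCompact S)
    (hne : S.Nonempty) {f : X → ℝ} (hf : UpperSemicontinuousOn f S) :
    ∃ p ∈ S, ∀ q ∈ S, f q ≤ f p := by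
  by_contra h
  push_neg at h
  have hch : ∀ x (hx : x ∈ S), ∃ U : Set X, IsOpen U ∧ x ∈ U ∧
      ∀ y ∈ U ∩ S, f y < f (h x hx).choose := by
    intro x hx
    obtain ⟨hq, hfq⟩ := (h x hx).choose_spec
    have h2 : ∀ᶠ y in 𝓝[S] x, f y < f (h x hx).choose := hf x hx _ hfq
    obtain ⟨U, hUo, hxU, hU⟩ := mem_nhdsWithin.mp h2
    exact ⟨U, hUo, hxU, fun y hy => hU hy⟩
  choose U hUo hxU hfU using hch
  obtain ⟨t, ht⟩ := hS.elim_nhds_subcover' U (fun x hx => (hUo x hx).mem_nhds (hxU x hx))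
  have htne : t.Nonempty := by
    obtain ⟨x0, hx0⟩ := hne
    obtain ⟨x, hxt, -⟩ := Set.mem_iUnion₂.mp (ht hx0)
    exact ⟨x, hxt⟩
  obtain ⟨b, hbt, hb⟩ := t.exists_max_image (fun x : S => f (h x.1 x.2).choose) htne
  set y := (h b.1 b.2).choose with hy
  have hyS : y ∈ S := (h b.1 b.2).choose_spec.1
  obtain ⟨x, hxt, hyU⟩ := Set.mem_iUnion₂.mp (ht hyS)
  have h1 : f y < f (h x.1 x.2).choose := hfU x.1 x.2 y ⟨hyU, hyS⟩
  have h2 : f (h x.1 x.2).choose ≤ f y := hb x hxt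
  linarith

lemma pucci_smul_one (lam Lam c : ℝ) (hc : 0 ≤ c) (d : ℕ) :
    pucciPlus lam Lam ((c • 1 : Mat d)) = d * (Lam * c) := by
  have hM : (c • 1 : Mat d).IsHermitian := by
    unfold Matrix.IsHermitian
    rw [Matrix.conjTranspose_smul, Matrix.conjTranspose_one]
    simp
  rw [pucciPlus, dif_pos hM]
  have heig : ∀ i, hM.eigenvalues i = c := by
    intro i
    have h1 := hM.mulVec_eigenvectorBasis i
    rw [Matrix.smul_mulVec, Matrix.one_mulVec] at h1
    have hne : (hM.eigenvectorBasis i : Spc d) ≠ 0 :=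
      hM.eigenvectorBasis.orthonormal.ne_zero i
    obtain ⟨j, hj⟩ : ∃ j, (hM.eigenvectorBasis i : Spc d) j ≠ 0 := by
      by_contra hall
      push_neg at hall
      exact hne (by ext j; simpa using hall j)
    have h2 := congrFun h1 j
    simp only [Pi.smul_apply, smul_eq_mul] at h2
    exact (mul_right_cancel₀ hj h2).symm
  simp only [heig, max_eq_left hc, min_eq_right hc, mul_zero, add_zero]
  rw [Finset.sum_const, Finset.card_univ, Fintype.card_fin, nsmul_eq_mul]

/-- The barrier function. -/
def psiF (d : ℕ) (a b c : ℝ) : Spc d × ℝ → ℝ :=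
  fun p => c + a * (∑ i, p.1 i ^ 2) + b * p.2

lemma psiF_contDiff (d : ℕ) (a b c : ℝ) : ContDiff ℝ 2 (psiF d a b c) := by
  have h1 : ContDiff ℝ 2 (fun p : Spc d × ℝ => ∑ i, p.1 i ^ 2) := by
    apply ContDiff.sum
    intro i _
    exact ((EuclideanSpace.proj i : Spc d →L[ℝ] ℝ).contDiff.comp contDiff_fst).pow 2
  exact (contDiff_const.add (contDiff_const.mul h1)).add (contDiff_const.mul contDiff_snd)

lemma psiF_timeDeriv (d : ℕ) (a b c : ℝ) (p : Spc d × ℝ) :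
    timeDeriv (psiF d a b c) p = b := by
  have h : HasDerivAt (fun s : ℝ => psiF d a b c (p.1, s)) b p.2 := by
    have h0 := ((hasDerivAt_id p.2).const_mul b).const_add (c + a * ∑ i, p.1 i ^ 2)
    simpa [psiF] using h0
  simpa [timeDeriv] using h.deriv

lemma psiF_hasFDeriv (d : ℕ) (a b c : ℝ) (t : ℝ) (y : Spc d) :
    HasFDerivAt (fun z : Spc d => psiF d a b c (z, t))
      (a • ∑ i, (2 * y i) • (EuclideanSpace.proj i : Spc d →L[ℝ] ℝ)) y := by
  have h1 : HasFDerivAt (fun z : Spc d => ∑ i, z i ^ 2)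
      (∑ i, (2 * y i) • (EuclideanSpace.proj i : Spc d →L[ℝ] ℝ)) y := by
    apply HasFDerivAt.fun_sum
    intro i _
    have hp : HasFDerivAt (⇑(EuclideanSpace.proj i : Spc d →L[ℝ] ℝ))
        (EuclideanSpace.proj i : Spc d →L[ℝ] ℝ) y :=
      (EuclideanSpace.proj i : Spc d →L[ℝ] ℝ).hasFDerivAt
    have h2 := hp.fun_mul hp
    have h3 : (2 * y i) • (EuclideanSpace.proj i : Spc d →L[ℝ] ℝ)
        = y i • (EuclideanSpace.proj i : Spc d →L[ℝ] ℝ)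
          + y i • (EuclideanSpace.proj i : Spc d →L[ℝ] ℝ) := by
      rw [two_mul, add_smul]
    rw [h3]
    simpa [pow_two, PiLp.proj_apply] using h2
  exact ((h1.const_mul a).const_add c).add_const (b * t)

lemma psiF_spaceHess (d : ℕ) (a b c : ℝ) (p : Spc d × ℝ) :
    spaceHess (psiF d a b c) p = (2 * a) • (1 : Mat d) := by
  have hf : ∀ y : Spc d, fderiv ℝ (fun z : Spc d => psiF d a b c (z, p.2)) y
      = a • ∑ i, (2 * y i) • (EuclideanSpace.proj i : Spc d →L[ℝ] ℝ) :=
    fun y => (psiF_hasFDeriv d a b c p.2 y).fderiv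
  ext i j
  show fderiv ℝ (fun y => (fderiv ℝ (fun z => psiF d a b c (z, p.2)) y)
      (EuclideanSpace.single j 1)) p.1 (EuclideanSpace.single i 1)
    = ((2 * a) • (1 : Mat d)) i j
  have hfun : (fun y : Spc d => (fderiv ℝ (fun z : Spc d => psiF d a b c (z, p.2)) y)
      (EuclideanSpace.single j 1)) = fun y : Spc d => (2 * a) * y j := by
    funext y
    rw [hf y]
    simp only [ContinuousLinearMap.coe_smul', Pi.smul_apply, ContinuousLinearMap.coe_sum',
      Finset.sum_apply, ContinuousLinearMap.coe_smul, smul_eq_mul]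
    have : ∀ i', (EuclideanSpace.proj i' : Spc d →L[ℝ] ℝ) (EuclideanSpace.single j 1)
        = if i' = j then 1 else 0 := by
      intro i'
      simp [EuclideanSpace.single_apply]
    simp only [this, mul_ite, mul_one, mul_zero, Finset.sum_ite_eq', Finset.mem_univ, if_true]
    ring
  rw [hfun]
  have hlin : HasFDerivAt (fun y : Spc d => (2 * a) * (EuclideanSpace.proj j : Spc d →L[ℝ] ℝ) y)
      ((2 * a) • (EuclideanSpace.proj j : Spc d →L[ℝ] ℝ)) p.1 :=
    (EuclideanSpace.proj j : Spc d →L[ℝ] ℝ).hasFDerivAt.const_mul (2 * a)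
  have hfde : fderiv ℝ (fun y : Spc d => (2 * a) * y j) p.1
      = (2 * a) • (EuclideanSpace.proj j : Spc d →L[ℝ] ℝ) := hlin.fderiv
  rw [hfde]
  simp only [ContinuousLinearMap.coe_smul', Pi.smul_apply, smul_eq_mul, Matrix.smul_apply,
    Matrix.one_apply]
  by_cases hij : i = j
  · subst hij; simp [EuclideanSpace.single_apply]
  · simp [EuclideanSpace.single_apply, hij, Ne.symm hij]

lemma sum_sq_eq_norm_sq {d : ℕ} (x : Spc d) : (∑ i, x i ^ 2) = ‖x‖ ^ 2 := by
  rw [EuclideanSpace.norm_eq]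
  rw [Real.sq_sqrt (by positivity)]
  simp [sq_abs]

end Aux

set_option maxHeartbeats 1000000 in
/-- Lemma 6.1: localization lemma near the bottom boundary; the constant
`C` depends only on `C₀, d, Λ`. -/
theorem stmt12 (d : ℕ) (hd : 1 ≤ d) (Lam C₀ : ℝ) (hC₀ : 0 < C₀) :
    ∃ C : ℝ, 0 < C ∧
      ∀ lam : ℝ, 0 < lam → lam ≤ Lam →
      ∀ c₀ L R : ℝ, 0 < c₀ → c₀ < C₀ → 0 < R → R < L →
      ∀ w : Spc d × ℝ → ℝ,
        UpperSemicontinuousOn w (closure (QLb L : Set (Spc d × ℝ))) →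
        ViscSubsol (QLb L) w (fun M _ _ => pucciPlus lam Lam M) →
        (∀ x : Spc d, ‖x‖ ≤ L → w (x, 0) ≤ c₀) →
        (∀ p ∈ closure (QLb L : Set (Spc d × ℝ)), w p ≤ C₀) →
        ∀ p ∈ closure (QLb R : Set (Spc d × ℝ)), w p ≤ c₀ + C * R ^ 2 / L ^ 2 := by
  classical
  refine ⟨C₀ * (2 * d * max Lam 1 + 2), by positivity, ?_⟩
  intro lam hlam hlamLam c₀ L R hc₀ hc₀C₀ hR hRL w husc hvisc hbot hbd p hp
  have hLam : 0 < Lam := lt_of_lt_of_le hlam hlamLam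
  have hL : 0 < L := hR.trans hRL
  have hL2 : (0:ℝ) < L ^ 2 := by positivity
  set A := C₀ / L ^ 2 with hA
  set B := C₀ * (2 * d * Lam + 1) / L ^ 2 with hB
  have hApos : 0 < A := by rw [hA]; positivity
  have hBpos : 0 < B := by rw [hB]; positivity
  have hQ : ∀ M : ℝ, 0 < M → closure (QLb M : Set (Spc d × ℝ))
      = (Metric.closedBall (0 : Spc d) M) ×ˢ (Icc 0 (M ^ 2)) := by
    intro M hM
    have hprod : (QLb M : Set (Spc d × ℝ)) = (Metric.ball (0 : Spc d) M) ×ˢ (Ioo 0 (M ^ 2)) := by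
      ext q
      simp [QLb, Set.mem_prod, mem_ball_zero_iff]
    rw [hprod, closure_prod_eq, closure_ball _ (ne_of_gt hM),
      closure_Ioo (by positivity : (0:ℝ) ≠ M ^ 2)]
  have hSeq := hQ L hL
  have hScomp : IsCompact (closure (QLb L : Set (Spc d × ℝ))) := by
    rw [hSeq]; exact (isCompact_closedBall _ _).prod isCompact_Icc
  have hRL2 : (QLb R : Set (Spc d × ℝ)) ⊆ QLb L := by
    intro q hq
    exact ⟨hq.1.trans hRL, hq.2.1, hq.2.2.trans (by nlinarith)⟩
  have hpS : p ∈ closure (QLb L : Set (Spc d × ℝ)) := closure_mono hRL2 hp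
  set ψ := psiF d A B c₀ with hψ
  have hψnn : ∀ q : Spc d × ℝ, 0 ≤ q.2 → c₀ ≤ ψ q := by
    intro q hq
    have hs : (0:ℝ) ≤ ∑ i, q.1 i ^ 2 := Finset.sum_nonneg fun i _ => sq_nonneg _
    have : 0 ≤ A * (∑ i, q.1 i ^ 2) + B * q.2 := by positivity
    simp only [hψ, psiF]; linarith
  have hfusc : UpperSemicontinuousOn (fun q => w q - ψ q)
      (closure (QLb L : Set (Spc d × ℝ))) := by
    have hcont : Continuous (fun q => -ψ q) := ((psiF_contDiff d A B c₀).continuous).neg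
    have := husc.add (hcont.upperSemicontinuous.upperSemicontinuousOn
      (s := closure (QLb L : Set (Spc d × ℝ))))
    simpa [sub_eq_add_neg] using this
  obtain ⟨p₀, hp₀S, hmax⟩ := usc_exists_max hScomp ⟨p, hpS⟩ hfusc
  by_cases hpos : w p₀ - ψ p₀ ≤ 0
  · -- w ≤ ψ on closure, conclude
    have hwp : w p ≤ ψ p := by have := hmax p hpS; linarith
    have hpR := hp
    rw [hQ R hR] at hpR
    obtain ⟨hx, ht⟩ := hpR
    have hxn : ‖p.1‖ ≤ R := by simpa [mem_closedBall_zero_iff] using hx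
    have hsq : (∑ i, p.1 i ^ 2) ≤ R ^ 2 := by
      rw [sum_sq_eq_norm_sq]
      exact pow_le_pow_left₀ (norm_nonneg _) hxn 2
    have hsq0 : (0:ℝ) ≤ ∑ i, p.1 i ^ 2 := Finset.sum_nonneg fun i _ => sq_nonneg _
    have hd2 : (0:ℝ) ≤ (d : ℝ) := Nat.cast_nonneg d
    have hψp : ψ p - c₀ ≤ C₀ * (2 * d * max Lam 1 + 2) * R ^ 2 / L ^ 2 := by
      rw [le_div_iff₀ hL2]
      have hexp : (ψ p - c₀) * L ^ 2
          = C₀ * (∑ i, p.1 i ^ 2) + C₀ * (2 * d * Lam + 1) * p.2 := by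
        simp only [hψ, psiF, hA, hB]
        field_simp
        ring
      rw [hexp]
      have hm : Lam ≤ max Lam 1 := le_max_left _ _
      have hm1 : (1:ℝ) ≤ max Lam 1 := le_max_right _ _
      have e1 : C₀ * (∑ i, p.1 i ^ 2) ≤ C₀ * R ^ 2 :=
        mul_le_mul_of_nonneg_left hsq hC₀.le
      have e2 : C₀ * (2 * d * Lam + 1) * p.2 ≤ C₀ * (2 * d * max Lam 1 + 1) * R ^ 2 := by
        have c1 : C₀ * (2 * d * Lam + 1) ≤ C₀ * (2 * d * max Lam 1 + 1) := by
          have : (2:ℝ) * d * Lam ≤ 2 * d * max Lam 1 := by nlinarith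
          nlinarith
        have c2 : 0 ≤ C₀ * (2 * d * Lam + 1) := by positivity
        calc C₀ * (2 * d * Lam + 1) * p.2 ≤ C₀ * (2 * d * Lam + 1) * R ^ 2 :=
              mul_le_mul_of_nonneg_left ht.2 c2
          _ ≤ C₀ * (2 * d * max Lam 1 + 1) * R ^ 2 :=
              mul_le_mul_of_nonneg_right c1 (by positivity)
      nlinarith [e1, e2]
    linarith
  · push_neg at hpos
    exfalso
    have hp₀S' := hp₀S
    rw [hSeq] at hp₀S'
    obtain ⟨hx0, ht0⟩ := hp₀S'
    have hx0n : ‖p₀.1‖ ≤ L := by simpa [mem_closedBall_zero_iff] using hx0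
    have hwb : w p₀ ≤ C₀ := hbd p₀ hp₀S
    have hsq0 : (0:ℝ) ≤ ∑ i, p₀.1 i ^ 2 := Finset.sum_nonneg fun i _ => sq_nonneg _
    -- rule out boundary pieces
    have hxlt : ‖p₀.1‖ < L := by
      rcases lt_or_eq_of_le hx0n with h | h
      · exact h
      · exfalso
        have hsum : (∑ i, p₀.1 i ^ 2) = L ^ 2 := by rw [sum_sq_eq_norm_sq, h]
        have hψge : c₀ + C₀ ≤ ψ p₀ := by
          simp only [hψ, psiF, hsum]
          have h2 : 0 ≤ B * p₀.2 := mul_nonneg hBpos.le ht0.1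
          have h3 : A * L ^ 2 = C₀ := by rw [hA]; field_simp
          linarith
        linarith
    have htpos : 0 < p₀.2 := by
      rcases lt_or_eq_of_le ht0.1 with h | h
      · exact h
      · exfalso
        have hw0 : w p₀ ≤ c₀ := by
          have : p₀ = (p₀.1, 0) := by rw [Prod.ext_iff]; exact ⟨rfl, h.symm⟩
          rw [this]
          exact hbot p₀.1 hx0n
        have := hψnn p₀ ht0.1
        linarith
    have httop : p₀.2 < L ^ 2 := by
      rcases lt_or_eq_of_le ht0.2 with h | h
      · exact h
      · exfalso
        have hψge : c₀ + C₀ ≤ ψ p₀ := by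
          simp only [hψ, psiF]
          have h2 : 0 ≤ A * (∑ i, p₀.1 i ^ 2) := mul_nonneg hApos.le hsq0
          have h3 : C₀ ≤ B * p₀.2 := by
            rw [h]
            have hBL : B * L ^ 2 = C₀ * (2 * d * Lam + 1) := by
              rw [hB]; field_simp
            rw [hBL]
            nlinarith [mul_nonneg (mul_nonneg (by norm_num : (0:ℝ) ≤ 2)
              (Nat.cast_nonneg (α := ℝ) d)) hLam.le]
          linarith
        linarith
    have hp₀Q : p₀ ∈ (QLb L : Set (Spc d × ℝ)) := ⟨hxlt, htpos, httop⟩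
    have hloc : IsLocalMaxOn (fun q => w q - ψ q) (QLb L) p₀ :=
      eventually_nhdsWithin_of_forall fun q hq => hmax q (subset_closure hq)
    have hkey := hvisc ψ p₀ hp₀Q ((psiF_contDiff d A B c₀).contDiffAt) hloc
    simp only at hkey
    rw [hψ, psiF_timeDeriv, psiF_spaceHess,
      pucci_smul_one lam Lam (2 * A) (by positivity) d] at hkey
    -- hkey : B - d * (Lam * (2 * A)) ≤ 0
    rw [hA, hB] at hkey
    have hd2 : (0:ℝ) ≤ (d : ℝ) := Nat.cast_nonneg d
    have : C₀ * (2 * d * Lam + 1) - (d : ℝ) * (Lam * (2 * C₀)) ≤ 0 := by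
      have h4 := mul_le_mul_of_nonneg_right hkey hL2.le
      field_simp at h4
      nlinarith [h4]
    nlinarith [this]
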